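/- Let Θ be an MLL proof net and A a formula occurrence in Θ. There exists a DR-switching S (a 'principal switching' for A) such that the vertex set of the component Θ_S^A equals the empire e_Θ(A); moreover a switching S has this property iff it satisfies: (1) if A is a premise of a ⅋-link, S selects A in that link, and (2) for any ⅋-link with one premise in e_Θ(A) and the other not, S selects the premise outside e_Θ(A). -/

import Mathlib

/-- An MLL link: an ID-link (axiom link) with two conclusions,
a tensor link or a par link with two premises and one conclusion. -/
inductive MLLLink (V : Type) where
  | idl (c₁ c₂ : V)
  | tensor (a b c : V)
  | par (a b c : V)
deriving DecidableEq

namespace MLLLink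
variable {V V' : Type}

def prems : MLLLink V → List V
  | idl _ _ => []
  | tensor a b _ => [a, b]
  | par a b _ => [a, b]

def concls : MLLLink V → List V
  | idl c₁ c₂ => [c₁, c₂]
  | tensor _ _ c => [c]
  | par _ _ c => [c]

def isId : MLLLink V → Bool
  | idl _ _ => true
  | _ => false

def isTensor : MLLLink V → Bool
  | tensor _ _ _ => true
  | _ => false

def isPar : MLLLink V → Bool
  | par _ _ _ => true
  | _ => false

/-- Relabel the vertices of a link along a map. -/
def map (f : V → V') : MLLLink V → MLLLink V'
  | idl c₁ c₂ => idl (f c₁) (f c₂)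
  | tensor a b c => tensor (f a) (f b) (f c)
  | par a b c => par (f a) (f b) (f c)

/-- Forget whether a multiplicative link is ⊗ or ⅋ (normalizing ⅋ to ⊗). -/
def forget : MLLLink V → MLLLink V
  | par a b c => tensor a b c
  | L => L

end MLLLink

/-- An MLL proof structure on the set `V` of formula occurrences:
every occurrence is the conclusion of exactly one link and the premise of
at most one link, and the occurrences appearing in a link are distinct. -/
structure MLLProofStructure (V : Type) [DecidableEq V] where
  links : Finset (MLLLink V)
  concl_exists : ∀ v : V, ∃ L ∈ links, v ∈ L.concls
  concl_unique : ∀ v : V, ∀ L ∈ links, ∀ L' ∈ links,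
      v ∈ L.concls → v ∈ L'.concls → L = L'
  prem_unique : ∀ v : V, ∀ L ∈ links, ∀ L' ∈ links,
      v ∈ L.prems → v ∈ L'.prems → L = L'
  nodup : ∀ L ∈ links, (L.prems ++ L.concls).Nodup

variable {V : Type} [DecidableEq V]

/-- The edge generated by a link under a DR-switching `S`
(`S L = true` selects the left premise of a ⅋-link). -/
def switchEdge (S : MLLLink V → Bool) (L : MLLLink V) (v w : V) : Prop :=
  match L with
  | .idl c₁ c₂ => v = c₁ ∧ w = c₂
  | .tensor a b c => (v = a ∧ w = c) ∨ (v = b ∧ w = c)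
  | .par a b c =>
      (S (.par a b c) = true ∧ v = a ∧ w = c) ∨
      (S (.par a b c) = false ∧ v = b ∧ w = c)

def drRel (Θ : MLLProofStructure V) (S : MLLLink V → Bool) (v w : V) : Prop :=
  ∃ L ∈ Θ.links, switchEdge S L v w

/-- The Danos–Regnier graph of a proof structure under a switching. -/
def drGraph (Θ : MLLProofStructure V) (S : MLLLink V → Bool) : SimpleGraph V :=
  SimpleGraph.fromRel (drRel Θ S)

/-- Danos–Regnier criterion: a proof net is a proof structure all of whose
DR-graphs are acyclic and connected. -/
def IsProofNet (Θ : MLLProofStructure V) : Prop :=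
  ∀ S : MLLLink V → Bool, (drGraph Θ S).IsAcyclic ∧ (drGraph Θ S).Connected

/-- The edges from `A` down to the conclusion of the link of which `A` is a premise. -/
def belowEdges (Θ : MLLProofStructure V) (A : V) : Set (Sym2 V) :=
  {e | ∃ L ∈ Θ.links, A ∈ L.prems ∧ ∃ c ∈ L.concls, e = s(A, c)}

/-- The DR-graph with the edge below `A` deleted. -/
def empGraph (Θ : MLLProofStructure V) (S : MLLLink V → Bool) (A : V) : SimpleGraph V :=
  (drGraph Θ S).deleteEdges (belowEdges Θ A)

/-- The vertex set of `Θ_S^A`: the connected component of `A` in the DR-graph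
after deleting the edge below `A`. -/
def empComp (Θ : MLLProofStructure V) (S : MLLLink V → Bool) (A : V) : Set V :=
  {v | (empGraph Θ S A).Reachable A v}

/-- The empire of `A` in `Θ`. -/
def empire (Θ : MLLProofStructure V) (A : V) : Set V :=
  ⋂ S : MLLLink V → Bool, empComp Θ S A

/-- A conclusion of `Θ` is a formula occurrence which is a premise of no link. -/
def IsConclusion (Θ : MLLProofStructure V) (v : V) : Prop :=
  ∀ L ∈ Θ.links, v ∉ L.prems

/-- All premises and conclusions of a link lie in `X`. -/
def allIn (X : Set V) (L : MLLLink V) : Prop :=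
  (∀ w ∈ L.prems, w ∈ X) ∧ (∀ w ∈ L.concls, w ∈ X)

/-- `X` together with the links of `Θ` contained in `X` forms a proof structure. -/
def IsSubProofStructure (Θ : MLLProofStructure V) (X : Set V) : Prop :=
  ∀ v ∈ X, ∃ L ∈ Θ.links, v ∈ L.concls ∧ allIn X L

def subDrRel (Θ : MLLProofStructure V) (X : Set V) (S : MLLLink V → Bool)
    (v w : V) : Prop :=
  ∃ L ∈ Θ.links, allIn X L ∧ switchEdge S L v w

/-- The DR-graph of the substructure of `Θ` induced on `X`. -/
def subDrGraph (Θ : MLLProofStructure V) (X : Set V) (S : MLLLink V → Bool) :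
    SimpleGraph V :=
  SimpleGraph.fromRel (subDrRel Θ X S)

/-- `X` is a sub-proof net of `Θ`: it induces a proof structure whose
DR-graphs are all acyclic and connected (on `X`). -/
def IsSubProofNet (Θ : MLLProofStructure V) (X : Set V) : Prop :=
  IsSubProofStructure Θ X ∧
    ∀ S : MLLLink V → Bool, (subDrGraph Θ X S).IsAcyclic ∧
      ∀ v ∈ X, ∀ w ∈ X, (subDrGraph Θ X S).Reachable v w

/-- `A` is a conclusion of the substructure induced on `X`. -/
def IsConclusionOfSub (Θ : MLLProofStructure V) (X : Set V) (A : V) : Prop :=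
  A ∈ X ∧ ∀ L ∈ Θ.links, allIn X L → A ∉ L.prems

/-- `e` is an isomorphism of the underlying link graphs of `Θ₁` and `Θ₂`,
forgetting the ⊗/⅋ labels: they witness that `Θ₁` and `Θ₂` are in the same PS-family. -/
def FamilyIso {V₁ V₂ : Type} [DecidableEq V₁] [DecidableEq V₂]
    (Θ₁ : MLLProofStructure V₁) (Θ₂ : MLLProofStructure V₂) (e : V₁ ≃ V₂) : Prop :=
  Θ₁.links.image (fun L => (L.map e).forget) = Θ₂.links.image MLLLink.forget

/-- The number of (multiplicative) links at which the ⊗/⅋-labellings of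
`Θ₁` and `Θ₂` differ along `e`. -/
def diffCount {V₁ V₂ : Type} [DecidableEq V₁] [DecidableEq V₂]
    (Θ₁ : MLLProofStructure V₁) (Θ₂ : MLLProofStructure V₂) (e : V₁ ≃ V₂) : ℕ :=
  (Θ₁.links.filter (fun L => L.map e ∉ Θ₂.links)).card

/-- A principal switching for `A`: it selects `A` in any ⅋-link of which `A`
is a premise, and selects the premise outside `empire Θ A` in any ⅋-link with
exactly one premise in the empire (`S L = true` selects the left premise). -/
def IsPrincipal (Θ : MLLProofStructure V) (A : V) (S : MLLLink V → Bool) : Prop :=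
  (∀ a b c : V, MLLLink.par a b c ∈ Θ.links →
    (A = a → S (MLLLink.par a b c) = true) ∧ (A = b → S (MLLLink.par a b c) = false)) ∧
  (∀ a b c : V, MLLLink.par a b c ∈ Θ.links →
    (a ∈ empire Θ A ∧ b ∉ empire Θ A → S (MLLLink.par a b c) = false) ∧
    (b ∈ empire Θ A ∧ a ∉ empire Θ A → S (MLLLink.par a b c) = true))
namespace PrincipalProof
open SimpleGraph

variable {V : Type} [DecidableEq V]

lemma walk_ind' {G : SimpleGraph V} {P : V → Prop}
    (h : ∀ x y, G.Adj x y → P x → P y) {u v : V} (w : G.Walk u v) : P u → P v := by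
  induction w with
  | nil => exact id
  | cons hadj _ ih => exact fun hu => ih (h _ _ hadj hu)

lemma walk_ind {G : SimpleGraph V} {P : V → Prop}
    (h : ∀ x y, G.Adj x y → P x → P y) {u v : V} (hr : G.Reachable u v) (hu : P u) : P v := by
  obtain ⟨w⟩ := hr
  exact walk_ind' h w hu

lemma avoid {H : SimpleGraph V} {a b u v : V} (w : H.Walk u v) :
    (H.deleteEdges {s(a,b)}).Reachable u v ∨ (H.deleteEdges {s(a,b)}).Reachable u a ∨
      (H.deleteEdges {s(a,b)}).Reachable u b := by
  induction w with
  | nil => exact Or.inl (Reachable.refl _)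
  | @cons u x v hadj p ih =>
    by_cases he : s(u, x) = s(a, b)
    · rw [Sym2.eq_iff] at he
      rcases he with ⟨rfl, rfl⟩ | ⟨rfl, rfl⟩
      · exact Or.inr (Or.inl (Reachable.refl _))
      · exact Or.inr (Or.inr (Reachable.refl _))
    · have hadj' : (H.deleteEdges {s(a,b)}).Adj u x := by
        rw [SimpleGraph.deleteEdges_adj]
        exact ⟨hadj, by simpa using he⟩
      rcases ih with h1 | h1 | h1
      · exact Or.inl (hadj'.reachable.trans h1)
      · exact Or.inr (Or.inl (hadj'.reachable.trans h1))
      · exact Or.inr (Or.inr (hadj'.reachable.trans h1))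

lemma bridge_not_reach {G : SimpleGraph V} (hac : G.IsAcyclic) {x y : V} (h : G.Adj x y) :
    ¬ (G.deleteEdges {s(x,y)}).Reachable x y := by
  have hb := (isAcyclic_iff_forall_adj_isBridge.mp hac) h
  rw [isBridge_iff] at hb
  exact hb

lemma no_extra {G G' : SimpleGraph V} (hac : G.IsAcyclic) {u v : V} (h : G.Adj u v)
    (hle : ∀ x y, G'.Adj x y → G.Adj x y ∧ s(x,y) ≠ s(u,v)) (hr : G'.Reachable u v) : False := by
  apply bridge_not_reach hac h
  refine hr.mono ?_
  intro x y hxy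
  rw [SimpleGraph.deleteEdges_adj]
  exact ⟨(hle x y hxy).1, by simpa using (hle x y hxy).2⟩

end PrincipalProof
set_option linter.unusedSectionVars false

namespace PrincipalProof
open SimpleGraph

variable {V : Type} [DecidableEq V]

lemma prems_concls_ne {Θ : MLLProofStructure V} {L : MLLLink V} (hL : L ∈ Θ.links)
    {x y : V} (hp : x ∈ L.prems) (hc : y ∈ L.concls) : x ≠ y := by
  have h := Θ.nodup L hL
  rw [List.nodup_append] at h
  intro h'
  subst h'
  exact h.2.2 _ hp _ hc rfl

lemma par_nodup {Θ : MLLProofStructure V} {a b c : V} (hL : MLLLink.par a b c ∈ Θ.links) :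
    a ≠ b ∧ a ≠ c ∧ b ≠ c := by
  have h := Θ.nodup _ hL
  simp [MLLLink.prems, MLLLink.concls] at h
  tauto

lemma tensor_nodup {Θ : MLLProofStructure V} {a b c : V} (hL : MLLLink.tensor a b c ∈ Θ.links) :
    a ≠ b ∧ a ≠ c ∧ b ≠ c := by
  have h := Θ.nodup _ hL
  simp [MLLLink.prems, MLLLink.concls] at h
  tauto

lemma switchEdge_cases {S : MLLLink V → Bool} {L : MLLLink V} {x y : V}
    (h : switchEdge S L x y) :
    (L = MLLLink.idl x y) ∨ (x ∈ L.prems ∧ L.concls = [y]) := by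
  cases L with
  | idl c₁ c₂ =>
    obtain ⟨rfl, rfl⟩ := h
    exact Or.inl rfl
  | tensor a b c =>
    rcases h with ⟨rfl, rfl⟩ | ⟨rfl, rfl⟩ <;>
      simp [MLLLink.prems, MLLLink.concls]
  | par a b c =>
    rcases h with ⟨_, rfl, rfl⟩ | ⟨_, rfl, rfl⟩ <;>
      simp [MLLLink.prems, MLLLink.concls]

lemma switchEdge_congr {S T : MLLLink V → Bool} {L : MLLLink V} (h : S L = T L) {x y : V}
    (he : switchEdge S L x y) : switchEdge T L x y := by
  cases L with
  | idl c₁ c₂ => exact he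
  | tensor a b c => exact he
  | par a b c =>
    rcases he with ⟨hv, rfl, rfl⟩ | ⟨hv, rfl, rfl⟩
    · exact Or.inl ⟨h ▸ hv, rfl, rfl⟩
    · exact Or.inr ⟨h ▸ hv, rfl, rfl⟩

lemma switchEdge_nonpar {S T : MLLLink V → Bool} {L : MLLLink V} (h : ¬ L.isPar = true)
    {x y : V} (he : switchEdge S L x y) : switchEdge T L x y := by
  cases L with
  | idl c₁ c₂ => exact he
  | tensor a b c => exact he
  | par a b c => exact absurd rfl h

lemma dr_adj_intro {Θ : MLLProofStructure V} {S : MLLLink V → Bool} {L : MLLLink V}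
    (hL : L ∈ Θ.links) {x y : V} (hxy : x ≠ y) (h : switchEdge S L x y) :
    (drGraph Θ S).Adj x y := by
  rw [drGraph, SimpleGraph.fromRel_adj]
  exact ⟨hxy, Or.inl ⟨L, hL, h⟩⟩

lemma dr_adj_elim {Θ : MLLProofStructure V} {S : MLLLink V → Bool} {x y : V}
    (h : (drGraph Θ S).Adj x y) :
    x ≠ y ∧ ∃ L ∈ Θ.links, switchEdge S L x y ∨ switchEdge S L y x := by
  rw [drGraph, SimpleGraph.fromRel_adj] at h
  obtain ⟨hne, h | h⟩ := h
  · obtain ⟨L, hL, hE⟩ := h; exact ⟨hne, L, hL, Or.inl hE⟩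
  · obtain ⟨L, hL, hE⟩ := h; exact ⟨hne, L, hL, Or.inr hE⟩

/-- Modify a switching at a single link. -/
def setPar (T : MLLLink V → Bool) (L : MLLLink V) (v : Bool) : MLLLink V → Bool :=
  fun M => if M = L then v else T M

@[simp] lemma setPar_eq {T : MLLLink V → Bool} {L : MLLLink V} {v : Bool} :
    setPar T L v L = v := if_pos rfl

lemma setPar_ne {T : MLLLink V → Bool} {L M : MLLLink V} {v : Bool} (h : M ≠ L) :
    setPar T L v M = T M := if_neg h

end PrincipalProof

namespace PrincipalProof
open SimpleGraph

variable {V : Type} [DecidableEq V]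
variable {T : MLLProofStructure V} {A : V} {LA : MLLLink V} {cA : V}

lemma below_eq (hLA : LA ∈ T.links) (hApr : A ∈ LA.prems) (hLAc : LA.concls = [cA]) :
    belowEdges T A = {s(A, cA)} := by
  ext e
  constructor
  · rintro ⟨L, hL, hAp, c, hc, rfl⟩
    have hLL : L = LA := T.prem_unique A L hL LA hLA hAp hApr
    subst hLL
    rw [hLAc] at hc
    simp at hc
    subst hc
    rfl
  · intro he
    rw [Set.mem_singleton_iff] at he
    subst he
    exact ⟨LA, hLA, hApr, cA, by rw [hLAc]; simp, rfl⟩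

lemma hAcA (hLA : LA ∈ T.links) (hApr : A ∈ LA.prems) (hLAc : LA.concls = [cA]) :
    A ≠ cA :=
  prems_concls_ne hLA hApr (by rw [hLAc]; simp)

lemma emp_adj (hLA : LA ∈ T.links) (hApr : A ∈ LA.prems) (hLAc : LA.concls = [cA])
    {S : MLLLink V → Bool} {x y : V} :
    (empGraph T S A).Adj x y ↔ (drGraph T S).Adj x y ∧ s(x,y) ≠ s(A,cA) := by
  rw [empGraph, below_eq hLA hApr hLAc, SimpleGraph.deleteEdges_adj]
  simp

lemma mem_empComp {S : MLLLink V → Bool} {v : V} :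
    v ∈ empComp T S A ↔ (empGraph T S A).Reachable A v := Iff.rfl

lemma mem_empire_iff {v : V} : v ∈ empire T A ↔ ∀ S, v ∈ empComp T S A := Set.mem_iInter

lemma mem_empire_self : A ∈ empire T A :=
  Set.mem_iInter.2 fun _ => SimpleGraph.Reachable.refl _

lemma empire_subset {S : MLLLink V → Bool} : empire T A ⊆ empComp T S A :=
  Set.iInter_subset _ S

lemma comp_univ (hT : IsProofNet T) (hLA : LA ∈ T.links) (hApr : A ∈ LA.prems)
    (hLAc : LA.concls = [cA]) {S : MLLLink V → Bool}
    (h : ¬ (drGraph T S).Adj A cA) (v : V) : v ∈ empComp T S A := by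
  have hr := ((hT S).2).preconnected A v
  refine walk_ind (P := fun v => (empGraph T S A).Reachable A v) ?_ hr (Reachable.refl _)
  intro x y hxy hx
  refine hx.trans (Adj.reachable ?_)
  rw [emp_adj hLA hApr hLAc]
  refine ⟨hxy, fun he => h ?_⟩
  rw [Sym2.eq_iff] at he
  rcases he with ⟨rfl, rfl⟩ | ⟨rfl, rfl⟩
  · exact hxy
  · exact hxy.symm

lemma partition (hT : IsProofNet T) (hLA : LA ∈ T.links) (hApr : A ∈ LA.prems)
    (hLAc : LA.concls = [cA]) {S : MLLLink V → Bool}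
    (v : V) : v ∈ empComp T S A ∨ (empGraph T S A).Reachable cA v := by
  have hr := ((hT S).2).preconnected A v
  refine walk_ind
    (P := fun v => (empGraph T S A).Reachable A v ∨ (empGraph T S A).Reachable cA v) ?_ hr
    (Or.inl (Reachable.refl _))
  intro x y hxy hx
  by_cases he : s(x,y) = s(A, cA)
  · rw [Sym2.eq_iff] at he
    rcases he with ⟨rfl, rfl⟩ | ⟨rfl, rfl⟩
    · exact Or.inr (Reachable.refl _)
    · exact Or.inl (Reachable.refl _)
  · have hadj : (empGraph T S A).Adj x y := by
      rw [emp_adj hLA hApr hLAc]; exact ⟨hxy, he⟩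
    rcases hx with hx | hx
    · exact Or.inl (hx.trans hadj.reachable)
    · exact Or.inr (hx.trans hadj.reachable)

lemma notAc (hT : IsProofNet T) (hLA : LA ∈ T.links) (hApr : A ∈ LA.prems)
    (hLAc : LA.concls = [cA]) {S : MLLLink V → Bool}
    (h : (drGraph T S).Adj A cA) : ¬ (empGraph T S A).Reachable A cA := by
  have hb := bridge_not_reach ((hT S).1) h
  rw [empGraph, below_eq hLA hApr hLAc]
  exact hb

lemma not_both (hT : IsProofNet T) (hLA : LA ∈ T.links) (hApr : A ∈ LA.prems)
    (hLAc : LA.concls = [cA]) {S : MLLLink V → Bool} {v : V}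
    (h : (drGraph T S).Adj A cA) (hv : v ∈ empComp T S A)
    (hr : (empGraph T S A).Reachable cA v) : False :=
  notAc hT hLA hApr hLAc h (hv.trans hr.symm)

lemma cA_not_empire (hT : IsProofNet T) (hLA : LA ∈ T.links) (hApr : A ∈ LA.prems)
    (hLAc : LA.concls = [cA]) : cA ∉ empire T A := by
  intro hmem
  obtain ⟨S', hadj⟩ : ∃ S', (drGraph T S').Adj A cA := by
    cases LA with
    | idl c₁ c₂ => simp [MLLLink.prems] at hApr
    | tensor a b c =>
      have hc : c = cA := by simpa [MLLLink.concls] using hLAc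
      subst hc
      have hA : A = a ∨ A = b := by simpa [MLLLink.prems] using hApr
      refine ⟨fun _ => true, dr_adj_intro hLA (hAcA hLA hApr hLAc) ?_⟩
      rcases hA with rfl | rfl
      · exact Or.inl ⟨rfl, rfl⟩
      · exact Or.inr ⟨rfl, rfl⟩
    | par a b c =>
      have hc : c = cA := by simpa [MLLLink.concls] using hLAc
      subst hc
      have hA : A = a ∨ A = b := by simpa [MLLLink.prems] using hApr
      refine ⟨setPar (fun _ => true) (MLLLink.par a b c) (decide (A = a)),
        dr_adj_intro hLA (hAcA hLA hApr hLAc) ?_⟩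
      rcases hA with hA | hA
      · exact Or.inl ⟨by rw [setPar_eq]; exact decide_eq_true hA, hA, rfl⟩
      · have hab : a ≠ b := (par_nodup hLA).1
        have hna : ¬ (A = a) := fun h' => hab (h'.symm.trans hA)
        exact Or.inr ⟨by rw [setPar_eq]; exact decide_eq_false hna, hA, rfl⟩
  exact notAc hT hLA hApr hLAc hadj (empire_subset hmem)

end PrincipalProof

namespace PrincipalProof
open SimpleGraph

variable {V : Type} [DecidableEq V]
variable {T : MLLProofStructure V} {A : V} {LA : MLLLink V} {cA : V}

lemma selA_val (hLA : LA ∈ T.links) (hApr : A ∈ LA.prems) (hLAc : LA.concls = [cA]) :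
    ∃ v0 : Bool, ∀ (S0 : MLLLink V → Bool), S0 LA = v0 → switchEdge S0 LA A cA := by
  cases LA with
  | idl c₁ c₂ => simp [MLLLink.prems] at hApr
  | tensor a b c =>
    have hc : c = cA := by simpa [MLLLink.concls] using hLAc
    subst hc
    have hA : A = a ∨ A = b := by simpa [MLLLink.prems] using hApr
    refine ⟨true, fun S0 _ => ?_⟩
    rcases hA with hA | hA
    · exact Or.inl ⟨hA, rfl⟩
    · exact Or.inr ⟨hA, rfl⟩
  | par a b c =>
    have hc : c = cA := by simpa [MLLLink.concls] using hLAc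
    subst hc
    have hA : A = a ∨ A = b := by simpa [MLLLink.prems] using hApr
    rcases hA with hA | hA
    · exact ⟨true, fun S0 h0 => Or.inl ⟨h0, hA, rfl⟩⟩
    · exact ⟨false, fun S0 h0 => Or.inr ⟨h0, hA, rfl⟩⟩

/-- There is no ⅋-link of which `cA` is a premise and `A` the conclusion. -/
lemma revu (hT : IsProofNet T) (hLA : LA ∈ T.links) (hApr : A ∈ LA.prems)
    (hLAc : LA.concls = [cA]) {u w : V} (hN : MLLLink.par u w A ∈ T.links)
    (hc : u = cA ∨ w = cA) : False := by
  obtain ⟨vA, hvA⟩ := selA_val hLA hApr hLAc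
  have hnd := par_nodup hN
  have huw : u ≠ w := hnd.1
  have huA : u ≠ A := hnd.2.1
  have hwA : w ≠ A := hnd.2.2
  have hNLA : MLLLink.par u w A ≠ LA := by
    intro h
    exact prems_concls_ne hLA hApr
      (show A ∈ LA.concls from h ▸ (by simp [MLLLink.concls])) rfl
  have hAcA' : A ≠ cA := hAcA hLA hApr hLAc
  have hNconcl : A ∈ (MLLLink.par u w A).concls := by simp [MLLLink.concls]
  set N := MLLLink.par u w A with hNdef
  obtain ⟨p, v1, hpA, hpcA, hsel1, honly⟩ :
      ∃ (p : V) (v1 : Bool), p ≠ A ∧ p ≠ cA ∧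
        (∀ S0 : MLLLink V → Bool, S0 N = v1 → switchEdge S0 N p A) ∧
        (∀ (S0 : MLLLink V → Bool) (x y : V), S0 N = (!v1) → switchEdge S0 N x y →
          x = cA ∧ y = A) := by
    rcases hc with hcu | hcw
    · refine ⟨w, false, hwA, fun h => huw (hcu.trans h.symm), ?_, ?_⟩
      · exact fun S0 h0 => Or.inr ⟨h0, rfl, rfl⟩
      · intro S0 x y h0 hsw
        rcases hsw with ⟨_, h1, h2⟩ | ⟨hvv, _, _⟩
        · exact ⟨h1.trans hcu, h2⟩
        · rw [h0] at hvv; exact absurd hvv (by simp)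
    · refine ⟨u, true, huA, fun h => huw (h.trans hcw.symm), ?_, ?_⟩
      · exact fun S0 h0 => Or.inl ⟨h0, rfl, rfl⟩
      · intro S0 x y h0 hsw
        rcases hsw with ⟨hvv, _, _⟩ | ⟨_, h1, h2⟩
        · rw [h0] at hvv; exact absurd hvv (by simp)
        · exact ⟨h1.trans hcw, h2⟩
  set S1 := setPar (setPar (fun _ => true) LA vA) N v1 with hS1def
  have hS1N : S1 N = v1 := setPar_eq
  have hS1LA : S1 LA = vA := by
    rw [hS1def, setPar_ne (show LA ≠ N from fun h => hNLA h.symm), setPar_eq]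
  have h_adj_pA : (drGraph T S1).Adj p A :=
    dr_adj_intro hN hpA (hsel1 S1 hS1N)
  have h_adj_e : (drGraph T S1).Adj A cA :=
    dr_adj_intro hLA hAcA' (hvA S1 hS1LA)
  set S2 := setPar S1 N (!v1) with hS2def
  have hS2N : S2 N = (!v1) := setPar_eq
  have key : ∀ (M : MLLLink V), M ∈ T.links → ∀ x y : V, x ≠ y → switchEdge S2 M x y →
      (drGraph T S1).Adj x y ∧ ¬ s(x,y) = s(p,A) := by
    intro M hM x y hxy hsw2
    by_cases hMN : M = N
    · obtain ⟨h1, h2⟩ := honly S2 x y (hMN ▸ hS2N) (by rw [← hMN]; exact hsw2)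
      constructor
      · rw [h1, h2]; exact h_adj_e.symm
      · rw [h1, h2, Sym2.eq_iff]
        rintro (⟨e1, -⟩ | ⟨e1, -⟩)
        · exact hpcA e1.symm
        · exact hAcA' e1.symm
    · have hsw1 : switchEdge S1 M x y :=
        switchEdge_congr (by rw [hS2def, setPar_ne hMN]) hsw2
      refine ⟨dr_adj_intro hM hxy hsw1, ?_⟩
      intro heq
      rw [Sym2.eq_iff] at heq
      rcases switchEdge_cases hsw1 with hidl | ⟨hpm, hcl⟩
      · have hAc : A ∈ M.concls := by
          rw [hidl]
          rcases heq with ⟨-, h2⟩ | ⟨h1, -⟩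
          · exact (by simp [MLLLink.concls, h2.symm])
          · exact (by simp [MLLLink.concls, h1.symm])
        exact hMN (T.concl_unique A M hM N hN hAc hNconcl)
      · rcases heq with ⟨h1, h2⟩ | ⟨h1, h2⟩
        · have hAc : A ∈ M.concls := by rw [hcl, h2]; simp
          exact hMN (T.concl_unique A M hM N hN hAc hNconcl)
        · have hpmA : A ∈ M.prems := h1 ▸ hpm
          have hMLA : M = LA := T.prem_unique A M hM LA hLA hpmA hApr
          rw [hMLA, hLAc] at hcl
          have h3 : cA = y := by injection hcl
          exact hpcA (h2.symm.trans h3.symm)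
  have hle : ∀ x y : V, (drGraph T S2).Adj x y →
      (drGraph T S1).Adj x y ∧ s(x,y) ≠ s(p,A) := by
    intro x y hxy
    obtain ⟨hne, M, hM, hsw⟩ := dr_adj_elim hxy
    rcases hsw with h | h
    · exact key M hM x y hne h
    · have h2 := key M hM y x hne.symm h
      exact ⟨h2.1.symm, fun hh => h2.2 ((Sym2.eq_swap).trans hh)⟩
  exact no_extra (hT S1).1 h_adj_pA hle (((hT S2).2).preconnected p A)

end PrincipalProof

namespace PrincipalProof
open SimpleGraph

variable {V : Type} [DecidableEq V]
variable {T : MLLProofStructure V} {A : V}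

/-- If `A` is a premise of a ⅋-link with conclusion `c`, no link has `c` as a
premise and `A` as a conclusion. -/
lemma revp (hT : IsProofNet T) {a b c : V} (hpar : MLLLink.par a b c ∈ T.links)
    (hA : A = a ∨ A = b) {N : MLLLink V} (hN : N ∈ T.links) (hNp : c ∈ N.prems)
    (hNc : A ∈ N.concls) : False := by
  set P := MLLLink.par a b c with hPdef
  have hnd := par_nodup hpar
  have hcA' : c ≠ A := prems_concls_ne hN hNp hNc
  have hNP : N ≠ P := by
    intro h
    exact prems_concls_ne hpar (h ▸ hNp)
      (show c ∈ P.concls by simp [hPdef, MLLLink.concls]) rfl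
  have hPconcl : c ∈ P.concls := by simp [hPdef, MLLLink.concls]
  obtain ⟨vN, hselC⟩ : ∃ vN : Bool, ∀ S0 : MLLLink V → Bool, S0 N = vN →
      switchEdge S0 N c A := by
    cases N with
    | idl c₁ c₂ => simp [MLLLink.prems] at hNp
    | tensor u w g =>
      have hg : A = g := by simpa [MLLLink.concls] using hNc
      have hcu : c = u ∨ c = w := by simpa [MLLLink.prems] using hNp
      refine ⟨true, fun S0 _ => ?_⟩
      rcases hcu with h | h
      · exact Or.inl ⟨h, hg⟩
      · exact Or.inr ⟨h, hg⟩
    | par u w g =>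
      have hg : A = g := by simpa [MLLLink.concls] using hNc
      have hcu : c = u ∨ c = w := by simpa [MLLLink.prems] using hNp
      rcases hcu with h | h
      · exact ⟨true, fun S0 h0 => Or.inl ⟨h0, h, hg⟩⟩
      · exact ⟨false, fun S0 h0 => Or.inr ⟨h0, h, hg⟩⟩
  obtain ⟨vP, b', hb'A, hb'c, f_selB, f_only⟩ :
      ∃ (vP : Bool) (b' : V), b' ≠ A ∧ b' ≠ c ∧
        (∀ S0 : MLLLink V → Bool, S0 P = (!vP) → switchEdge S0 P b' c) ∧
        (∀ (S0 : MLLLink V → Bool) (x y : V), S0 P = vP → switchEdge S0 P x y →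
          x = A ∧ y = c) := by
    rcases hA with hA | hA
    · refine ⟨true, b, fun h => hnd.1 (hA.symm.trans h.symm), hnd.2.2, ?_, ?_⟩
      · exact fun S0 h0 => Or.inr ⟨by simpa using h0, rfl, rfl⟩
      · intro S0 x y h0 hsw
        rcases hsw with ⟨-, h1, h2⟩ | ⟨hvv, -, -⟩
        · exact ⟨h1.trans hA.symm, h2⟩
        · rw [h0] at hvv; exact absurd hvv (by simp)
    · refine ⟨false, a, fun h => hnd.1 (h.trans hA), hnd.2.1, ?_, ?_⟩
      · exact fun S0 h0 => Or.inl ⟨by simpa using h0, rfl, rfl⟩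
      · intro S0 x y h0 hsw
        rcases hsw with ⟨hvv, -, -⟩ | ⟨-, h1, h2⟩
        · rw [h0] at hvv; exact absurd hvv (by simp)
        · exact ⟨h1.trans hA.symm, h2⟩
  set S1 := setPar (setPar (fun _ => true) N vN) P (!vP) with hS1def
  have hS1P : S1 P = (!vP) := setPar_eq
  have hS1N : S1 N = vN := by rw [hS1def, setPar_ne hNP, setPar_eq]
  have h_adj_bc : (drGraph T S1).Adj b' c :=
    dr_adj_intro hpar hb'c (f_selB S1 hS1P)
  have h_adj_cA : (drGraph T S1).Adj c A :=
    dr_adj_intro hN hcA' (hselC S1 hS1N)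
  set S2 := setPar S1 P vP with hS2def
  have hS2P : S2 P = vP := setPar_eq
  have key : ∀ (M : MLLLink V), M ∈ T.links → ∀ x y : V, x ≠ y → switchEdge S2 M x y →
      (drGraph T S1).Adj x y ∧ ¬ s(x,y) = s(b',c) := by
    intro M hM x y hxy hsw2
    by_cases hMP : M = P
    · obtain ⟨h1, h2⟩ := f_only S2 x y (hMP ▸ hS2P) (by rw [← hMP]; exact hsw2)
      constructor
      · rw [h1, h2]; exact h_adj_cA.symm
      · rw [h1, h2, Sym2.eq_iff]
        rintro (⟨e1, -⟩ | ⟨e1, -⟩)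
        · exact hb'A e1.symm
        · exact hcA' e1.symm
    · have hsw1 : switchEdge S1 M x y :=
        switchEdge_congr (by rw [hS2def, setPar_ne hMP]) hsw2
      refine ⟨dr_adj_intro hM hxy hsw1, ?_⟩
      intro heq
      rw [Sym2.eq_iff] at heq
      rcases switchEdge_cases hsw1 with hidl | ⟨hpm, hcl⟩
      · have hcc : c ∈ M.concls := by
          rw [hidl]
          rcases heq with ⟨-, h2⟩ | ⟨h1, -⟩
          · exact (by simp [MLLLink.concls, h2.symm])
          · exact (by simp [MLLLink.concls, h1.symm])
        exact hMP (T.concl_unique c M hM P hpar hcc hPconcl)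
      · rcases heq with ⟨h1, h2⟩ | ⟨h1, h2⟩
        · have hcc : c ∈ M.concls := by rw [hcl, h2]; simp
          exact hMP (T.concl_unique c M hM P hpar hcc hPconcl)
        · have hcp : c ∈ M.prems := h1 ▸ hpm
          have hMN : M = N := T.prem_unique c M hM N hN hcp hNp
          rw [← hMN, hcl] at hNc
          have h3 : A = y := by simpa using hNc
          exact hb'A (h2.symm.trans h3.symm)
  have hle : ∀ x y : V, (drGraph T S2).Adj x y →
      (drGraph T S1).Adj x y ∧ s(x,y) ≠ s(b',c) := by
    intro x y hxy
    obtain ⟨hne, M, hM, hsw⟩ := dr_adj_elim hxy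
    rcases hsw with h | h
    · exact key M hM x y hne h
    · have h2 := key M hM y x hne.symm h
      exact ⟨h2.1.symm, fun hh => h2.2 ((Sym2.eq_swap).trans hh)⟩
  exact no_extra (hT S1).1 h_adj_bc hle (((hT S2).2).preconnected b' c)

end PrincipalProof

namespace PrincipalProof
open SimpleGraph

variable {V : Type} [DecidableEq V]
variable {T : MLLProofStructure V} {A : V}

lemma side (hT : IsProofNet T) {a b c : V} (hpar : MLLLink.par a b c ∈ T.links)
    (hA : A = a ∨ A = b) {b' : V}
    (hb'def : (A = a ∧ b' = b) ∨ (A = b ∧ b' = a)) : b' ∈ empire T A := by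
  set P := MLLLink.par a b c with hPdef
  have hnd := par_nodup hpar
  have hApr' : A ∈ P.prems := by
    rcases hA with h | h <;> simp [hPdef, MLLLink.prems, h]
  have hLAc' : P.concls = [c] := rfl
  have hAc' : A ≠ c := hAcA hpar hApr' hLAc'
  have hPconcl : c ∈ P.concls := by simp [hPdef, MLLLink.concls]
  obtain ⟨vA, b'', hb''eq, hb'A, hb'c, f_selA, f_selB, f_onlyA, f_onlyB⟩ :
      ∃ (vA : Bool) (b'' : V), b'' = b' ∧ b' ≠ A ∧ b' ≠ c ∧
        (∀ S0 : MLLLink V → Bool, S0 P = vA → switchEdge S0 P A c) ∧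
        (∀ S0 : MLLLink V → Bool, S0 P = (!vA) → switchEdge S0 P b' c) ∧
        (∀ (S0 : MLLLink V → Bool) (x y : V), S0 P = vA → switchEdge S0 P x y →
          x = A ∧ y = c) ∧
        (∀ (S0 : MLLLink V → Bool) (x y : V), S0 P = (!vA) → switchEdge S0 P x y →
          x = b' ∧ y = c) := by
    rcases hb'def with ⟨hA1, hb1⟩ | ⟨hA1, hb1⟩
    · refine ⟨true, b', rfl, ?_, ?_, ?_, ?_, ?_, ?_⟩
      · rw [hb1]; exact fun h => hnd.1 (hA1.symm.trans h.symm)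
      · rw [hb1]; exact hnd.2.2
      · exact fun S0 h0 => Or.inl ⟨h0, hA1, rfl⟩
      · exact fun S0 h0 => Or.inr ⟨by simpa using h0, hb1, rfl⟩
      · intro S0 x y h0 hsw
        rcases hsw with ⟨-, h1, h2⟩ | ⟨hvv, -, -⟩
        · exact ⟨h1.trans hA1.symm, h2⟩
        · rw [h0] at hvv; exact absurd hvv (by simp)
      · intro S0 x y h0 hsw
        rcases hsw with ⟨hvv, -, -⟩ | ⟨-, h1, h2⟩
        · rw [h0] at hvv; exact absurd hvv (by simp)
        · exact ⟨h1.trans hb1.symm, h2⟩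
    · refine ⟨false, b', rfl, ?_, ?_, ?_, ?_, ?_, ?_⟩
      · rw [hb1]; exact fun h => hnd.1 (h.trans hA1)
      · rw [hb1]; exact hnd.2.1
      · exact fun S0 h0 => Or.inr ⟨h0, hA1, rfl⟩
      · exact fun S0 h0 => Or.inl ⟨by simpa using h0, hb1, rfl⟩
      · intro S0 x y h0 hsw
        rcases hsw with ⟨hvv, -, -⟩ | ⟨-, h1, h2⟩
        · rw [h0] at hvv; exact absurd hvv (by simp)
        · exact ⟨h1.trans hA1.symm, h2⟩
      · intro S0 x y h0 hsw
        rcases hsw with ⟨-, h1, h2⟩ | ⟨hvv, -, -⟩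
        · exact ⟨h1.trans hb1.symm, h2⟩
        · rw [h0] at hvv; exact absurd hvv (by simp)
  clear hb''eq
  -- no link other than P ever contributes an edge with underlying Sym2 s(A,c)
  have claim_eA : ∀ (M : MLLLink V), M ∈ T.links → M ≠ P →
      ∀ (S0 : MLLLink V → Bool) (x y : V), switchEdge S0 M x y → ¬ s(x,y) = s(A,c) := by
    intro M hM hMP S0 x y hsw heq
    rw [Sym2.eq_iff] at heq
    rcases switchEdge_cases hsw with hidl | ⟨hpm, hcl⟩
    · have hcc : c ∈ M.concls := by
        rw [hidl]
        rcases heq with ⟨-, h2⟩ | ⟨h1, -⟩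
        · exact (by simp [MLLLink.concls, h2.symm])
        · exact (by simp [MLLLink.concls, h1.symm])
      exact hMP (T.concl_unique c M hM P hpar hcc hPconcl)
    · rcases heq with ⟨h1, h2⟩ | ⟨h1, h2⟩
      · have hcc : c ∈ M.concls := by rw [hcl, h2]; simp
        exact hMP (T.concl_unique c M hM P hpar hcc hPconcl)
      · have hcp : c ∈ M.prems := h1 ▸ hpm
        have hAcc : A ∈ M.concls := by rw [hcl, h2]; simp
        exact revp hT hpar hA hM hcp hAcc
  rw [mem_empire_iff]
  intro S0
  set SA := setPar S0 P vA with hSAdef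
  have hSAP : SA P = vA := setPar_eq
  have h_adj_e : (drGraph T SA).Adj A c :=
    dr_adj_intro hpar hAc' (f_selA SA hSAP)
  rcases partition hT hpar hApr' hLAc' (S := SA) b' with hbK | hrc
  · -- b' is on the A-side for SA : transfer the path back to S0
    have hmono : empGraph T SA A ≤ empGraph T S0 A := by
      intro x y hxy
      rw [emp_adj hpar hApr' hLAc'] at hxy ⊢
      obtain ⟨hadj, hnea⟩ := hxy
      obtain ⟨hne, M, hM, hsw⟩ := dr_adj_elim hadj
      have hMP : M ≠ P := by
        intro h
        rcases hsw with h1 | h1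
        · obtain ⟨e1, e2⟩ := f_onlyA SA x y (h ▸ hSAP) (by rw [← h]; exact h1)
          exact hnea (by rw [e1, e2])
        · obtain ⟨e1, e2⟩ := f_onlyA SA y x (h ▸ hSAP) (by rw [← h]; exact h1)
          exact hnea (by rw [e1, e2]; exact Sym2.eq_swap)
      refine ⟨?_, hnea⟩
      have hcongr : SA M = S0 M := by rw [hSAdef, setPar_ne hMP]
      rcases hsw with h1 | h1
      · exact dr_adj_intro hM hne (switchEdge_congr hcongr h1)
      · exact (dr_adj_intro hM hne.symm (switchEdge_congr hcongr h1)).symm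
    exact hbK.mono hmono
  · -- b' on the c-side for SA : contradiction using the flipped switching
    exfalso
    set SB := setPar S0 P (!vA) with hSBdef
    have hSBP : SB P = (!vA) := setPar_eq
    have hclosed : ∀ x y : V, (drGraph T SB).Adj x y →
        (empGraph T SA A).Reachable A x → (empGraph T SA A).Reachable A y := by
      intro x y hxy hx
      obtain ⟨hne, M, hM, hsw⟩ := dr_adj_elim hxy
      by_cases hMP : M = P
      · exfalso
        have hxbc : x = b' ∨ x = c := by
          rcases hsw with h1 | h1
          · exact Or.inl (f_onlyB SB x y (hMP ▸ hSBP) (by rw [← hMP]; exact h1)).1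
          · exact Or.inr (f_onlyB SB y x (hMP ▸ hSBP) (by rw [← hMP]; exact h1)).2
        rcases hxbc with rfl | rfl
        · exact not_both hT hpar hApr' hLAc' h_adj_e hx hrc
        · exact notAc hT hpar hApr' hLAc' h_adj_e hx
      · have hcongr : SB M = SA M := by rw [hSBdef, setPar_ne hMP, hSAdef, setPar_ne hMP]
        have hadjSA : (drGraph T SA).Adj x y := by
          rcases hsw with h1 | h1
          · exact dr_adj_intro hM hne (switchEdge_congr hcongr h1)
          · exact (dr_adj_intro hM hne.symm (switchEdge_congr hcongr h1)).symm
        have hnea : ¬ s(x,y) = s(A,c) := by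
          rcases hsw with h1 | h1
          · exact claim_eA M hM hMP SB x y h1
          · exact fun hh => claim_eA M hM hMP SB y x h1 ((Sym2.eq_swap).trans hh)
        have : (empGraph T SA A).Adj x y := by
          rw [emp_adj hpar hApr' hLAc']; exact ⟨hadjSA, hnea⟩
        exact hx.trans this.reachable
    have hcfin : (empGraph T SA A).Reachable A c :=
      walk_ind hclosed (((hT SB).2).preconnected A c) (Reachable.refl _)
    exact notAc hT hpar hApr' hLAc' h_adj_e hcfin

lemma side1 (hT : IsProofNet T) {a b c : V} (hpar : MLLLink.par a b c ∈ T.links)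
    (hA : A = a) : b ∈ empire T A :=
  side hT hpar (Or.inl hA) (Or.inl ⟨hA, rfl⟩)

lemma side2 (hT : IsProofNet T) {a b c : V} (hpar : MLLLink.par a b c ∈ T.links)
    (hA : A = b) : a ∈ empire T A :=
  side hT hpar (Or.inr hA) (Or.inr ⟨hA, rfl⟩)

end PrincipalProof

namespace PrincipalProof
open SimpleGraph

variable {V : Type} [DecidableEq V]
variable {T : MLLProofStructure V} {A : V} {LA : MLLLink V} {cA : V}

lemma up (hT : IsProofNet T) (hLA : LA ∈ T.links) (hApr : A ∈ LA.prems)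
    (hLAc : LA.concls = [cA]) {L : MLLLink V} {x c : V} (hcem : c ∈ empire T A)
    (hL : L ∈ T.links) (hx : x ∈ L.prems) (hcc : c ∈ L.concls)
    (hne : ¬ s(x,c) = s(A,cA)) : x ∈ empire T A := by
  rw [mem_empire_iff]
  intro S0
  by_cases hxA : x = A
  · rw [hxA]; exact Reachable.refl _
  have hxc : x ≠ c := prems_concls_ne hL hx hcc
  have hcS0 : (empGraph T S0 A).Reachable A c := empire_subset hcem
  by_cases hadj : (drGraph T S0).Adj x c
  · have hH : (empGraph T S0 A).Adj x c := by
      rw [emp_adj hLA hApr hLAc]; exact ⟨hadj, hne⟩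
    exact hcS0.trans hH.symm.reachable
  cases L with
  | idl c₁ c₂ => simp [MLLLink.prems] at hx
  | tensor u w g =>
    exfalso
    have hcg : c = g := by simpa [MLLLink.concls] using hcc
    have hxuw : x = u ∨ x = w := by simpa [MLLLink.prems] using hx
    refine hadj (dr_adj_intro hL hxc ?_)
    rcases hxuw with h | h
    · exact Or.inl ⟨h, hcg⟩
    · exact Or.inr ⟨h, hcg⟩
  | par u w g =>
    have hcg : c = g := by simpa [MLLLink.concls] using hcc
    subst hcg
    have hnd := par_nodup hL
    have hxuw : x = u ∨ x = w := by simpa [MLLLink.prems] using hx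
    set L0 := MLLLink.par u w c with hL0def
    obtain ⟨y, vf, hyx, hyc, hyprem, hsely, honly0, hselx, honlyf⟩ :
        ∃ (y : V) (vf : Bool), y ≠ x ∧ y ≠ c ∧ (y = u ∨ y = w) ∧
          switchEdge S0 L0 y c ∧
          (∀ x' y' : V, switchEdge S0 L0 x' y' → x' = y ∧ y' = c) ∧
          (∀ S' : MLLLink V → Bool, S' L0 = vf → switchEdge S' L0 x c) ∧
          (∀ (S' : MLLLink V → Bool) (x' y' : V), S' L0 = vf → switchEdge S' L0 x' y' →
            x' = x ∧ y' = c) := by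
      rcases hxuw with hxu | hxw
      · have hS0L : S0 L0 = false := by
          rcases Bool.eq_false_or_eq_true (S0 L0) with h | h
          · exact absurd (dr_adj_intro hL hxc (Or.inl ⟨h, hxu, rfl⟩)) hadj
          · exact h
        refine ⟨w, true, fun h => hnd.1 (hxu.symm.trans h.symm), hnd.2.2, Or.inr rfl,
          Or.inr ⟨hS0L, rfl, rfl⟩, ?_, fun S' h' => Or.inl ⟨h', hxu, rfl⟩, ?_⟩
        · intro x' y' hsw
          rcases hsw with ⟨hvv, -, -⟩ | ⟨-, h1, h2⟩
          · rw [hS0L] at hvv; exact absurd hvv (by simp)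
          · exact ⟨h1, h2⟩
        · intro S' x' y' h' hsw
          rcases hsw with ⟨-, h1, h2⟩ | ⟨hvv, -, -⟩
          · exact ⟨h1.trans hxu.symm, h2⟩
          · rw [h'] at hvv; exact absurd hvv (by simp)
      · have hS0L : S0 L0 = true := by
          rcases Bool.eq_false_or_eq_true (S0 L0) with h | h
          · exact h
          · exact absurd (dr_adj_intro hL hxc (Or.inr ⟨h, hxw, rfl⟩)) hadj
        refine ⟨u, false, fun h => hnd.1 (h.trans hxw), hnd.2.1, Or.inl rfl,
          Or.inl ⟨hS0L, rfl, rfl⟩, ?_, fun S' h' => Or.inr ⟨h', hxw, rfl⟩, ?_⟩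
        · intro x' y' hsw
          rcases hsw with ⟨-, h1, h2⟩ | ⟨hvv, -, -⟩
          · exact ⟨h1, h2⟩
          · rw [hS0L] at hvv; exact absurd hvv (by simp)
        · intro S' x' y' h' hsw
          rcases hsw with ⟨hvv, -, -⟩ | ⟨-, h1, h2⟩
          · rw [h'] at hvv; exact absurd hvv (by simp)
          · exact ⟨h1.trans hxw.symm, h2⟩
    have hyA : y ≠ A := by
      intro h
      have hApr2 : A ∈ L0.prems := by
        rw [← h]; simpa [hL0def, MLLLink.prems] using hyprem
      have hLLA : L0 = LA := T.prem_unique A L0 hL LA hLA hApr2 hApr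
      have hccA : c = cA := by
        have := hLAc; rw [← hLLA] at this
        simpa [hL0def, MLLLink.concls] using this
      exact cA_not_empire hT hLA hApr hLAc (hccA ▸ hcem)
    have hsne : ¬ s(y,c) = s(A,cA) := by
      intro hh
      rw [Sym2.eq_iff] at hh
      rcases hh with ⟨h1, -⟩ | ⟨h1, h2⟩
      · exact hyA h1
      · refine revu hT hLA hApr hLAc (show MLLLink.par u w A ∈ T.links from h2 ▸ hL) ?_
        rcases hyprem with h | h
        · exact Or.inl (h ▸ h1)
        · exact Or.inr (h ▸ h1)
    have hyadj : (drGraph T S0).Adj y c := dr_adj_intro hL hyc hsely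
    have hyH : (empGraph T S0 A).Adj y c := by
      rw [emp_adj hLA hApr hLAc]; exact ⟨hyadj, hsne⟩
    have hyComp : (empGraph T S0 A).Reachable A y := hcS0.trans hyH.symm.reachable
    by_cases hxcm : x ∈ empComp T S0 A
    · exact hxcm
    exfalso
    by_cases hAdjE : (drGraph T S0).Adj A cA
    case neg => exact hxcm (comp_univ hT hLA hApr hLAc hAdjE x)
    rcases partition hT hLA hApr hLAc (S := S0) x with h | hτ
    · exact hxcm h
    set SX := setPar S0 L0 vf with hSXdef
    have hflipx : switchEdge SX L0 x c := hselx SX setPar_eq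
    have hxQ : (empGraph T SX A).Reachable A x := by
      have hH : (empGraph T SX A).Adj x c := by
        rw [emp_adj hLA hApr hLAc]
        exact ⟨dr_adj_intro hL hxc hflipx, hne⟩
      exact (empire_subset hcem).trans hH.symm.reachable
    have hAdjEX : (drGraph T SX).Adj A cA := by
      obtain ⟨hne2, M, hM, hsw⟩ := dr_adj_elim hAdjE
      have hML : M ≠ L0 := by
        intro h
        rcases hsw with h1 | h1
        · obtain ⟨e1, e2⟩ := honly0 A cA (by rw [← h]; exact h1)
          exact hyA e1.symm
        · obtain ⟨e1, e2⟩ := honly0 cA A (by rw [← h]; exact h1)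
          apply hsne
          rw [show y = cA from e1.symm, show c = A from e2.symm]
          exact Sym2.eq_swap
      have hcongr : S0 M = SX M := by rw [hSXdef, setPar_ne hML]
      rcases hsw with h1 | h1
      · exact dr_adj_intro hM hne2 (switchEdge_congr hcongr h1)
      · exact (dr_adj_intro hM hne2.symm (switchEdge_congr hcongr h1)).symm
    obtain ⟨wlk⟩ := hτ
    have hle2 : ((empGraph T S0 A).deleteEdges {s(y,c)}) ≤ empGraph T SX A := by
      intro α β hαβ
      rw [SimpleGraph.deleteEdges_adj] at hαβ
      obtain ⟨hαβ, hnyc⟩ := hαβ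
      rw [emp_adj hLA hApr hLAc] at hαβ ⊢
      obtain ⟨hadj0, hnea⟩ := hαβ
      obtain ⟨hneαβ, M, hM, hsw⟩ := dr_adj_elim hadj0
      have hML : M ≠ L0 := by
        intro h
        rcases hsw with h1 | h1
        · obtain ⟨e1, e2⟩ := honly0 α β (by rw [← h]; exact h1)
          exact hnyc (by simp [e1, e2])
        · obtain ⟨e1, e2⟩ := honly0 β α (by rw [← h]; exact h1)
          refine hnyc (by simp only [Set.mem_singleton_iff]; rw [e1, e2]; exact Sym2.eq_swap)
      have hcongr : S0 M = SX M := by rw [hSXdef, setPar_ne hML]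
      refine ⟨?_, hnea⟩
      rcases hsw with h1 | h1
      · exact dr_adj_intro hM hneαβ (switchEdge_congr hcongr h1)
      · exact (dr_adj_intro hM hneαβ.symm (switchEdge_congr hcongr h1)).symm
    rcases avoid (a := y) (b := c) wlk with h1 | h1 | h1
    · exact not_both hT hLA hApr hLAc hAdjEX hxQ (h1.mono hle2)
    · exact not_both hT hLA hApr hLAc hAdjE hyComp
        (h1.mono (SimpleGraph.deleteEdges_le _))
    · exact not_both hT hLA hApr hLAc hAdjE hcS0
        (h1.mono (SimpleGraph.deleteEdges_le _))

end PrincipalProof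

namespace PrincipalProof
open SimpleGraph

variable {V : Type} [DecidableEq V]
variable {T : MLLProofStructure V} {A : V} {LA : MLLLink V} {cA : V}

lemma backward (hT : IsProofNet T) (hLA : LA ∈ T.links) (hApr : A ∈ LA.prems)
    (hLAc : LA.concls = [cA]) (S : MLLLink V → Bool) (hPr : IsPrincipal T A S) :
    empComp T S A = empire T A := by
  refine Set.Subset.antisymm ?_ empire_subset
  intro v hv
  refine walk_ind (G := empGraph T S A) (P := fun z => z ∈ empire T A) ?_ hv mem_empire_self
  intro w w' hadj hw
  rw [mem_empire_iff]
  intro S1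
  rw [emp_adj hLA hApr hLAc] at hadj
  obtain ⟨hG, hneA⟩ := hadj
  by_cases hT1 : (drGraph T S1).Adj w w'
  · have hH1 : (empGraph T S1 A).Adj w w' := by
      rw [emp_adj hLA hApr hLAc]; exact ⟨hT1, hneA⟩
    exact (empire_subset hw).trans hH1.reachable
  obtain ⟨hne, M, hM, hsw⟩ := dr_adj_elim hG
  cases M with
  | idl c1 c2 =>
    exfalso
    rcases hsw with h1 | h1
    · exact hT1 (dr_adj_intro hM hne (switchEdge_nonpar (by simp [MLLLink.isPar]) h1))
    · exact hT1 (dr_adj_intro hM hne.symm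
        (switchEdge_nonpar (by simp [MLLLink.isPar]) h1)).symm
  | tensor a b g =>
    exfalso
    rcases hsw with h1 | h1
    · exact hT1 (dr_adj_intro hM hne (switchEdge_nonpar (by simp [MLLLink.isPar]) h1))
    · exact hT1 (dr_adj_intro hM hne.symm
        (switchEdge_nonpar (by simp [MLLLink.isPar]) h1)).symm
  | par a b g =>
    have hST : ¬ S (MLLLink.par a b g) = S1 (MLLLink.par a b g) := by
      intro h
      rcases hsw with h1 | h1
      · exact hT1 (dr_adj_intro hM hne (switchEdge_congr h h1))
      · exact hT1 (dr_adj_intro hM hne.symm (switchEdge_congr h h1)).symm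
    have hprnd := par_nodup hM
    have hPr1 := hPr.1 a b g hM
    have hPr2 := hPr.2 a b g hM
    rcases hsw with h1 | h1
    · rcases h1 with ⟨hv, e1, e2⟩ | ⟨hv, e1, e2⟩
      · -- w = a selected by S (true), w' = g ; the S1-edge is (b, g)
        have hae : a ∈ empire T A := e1 ▸ hw
        have hqA : b ≠ A := by
          intro h
          have := hPr1.2 h.symm
          rw [this] at hv
          exact Bool.noConfusion hv
        have hqe : b ∈ empire T A := by
          by_contra hq
          rw [hPr2.1 ⟨hae, hq⟩] at hv
          exact Bool.noConfusion hv
        have hS1v : S1 (MLLLink.par a b g) = false := by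
          rcases Bool.eq_false_or_eq_true (S1 (MLLLink.par a b g)) with h | h
          · exact absurd (hv.trans h.symm) hST
          · exact h
        have hadjq : (drGraph T S1).Adj b g :=
          dr_adj_intro hM hprnd.2.2 (Or.inr ⟨hS1v, rfl, rfl⟩)
        have hqnea : ¬ s(b,g) = s(A,cA) := by
          intro hh
          rw [Sym2.eq_iff] at hh
          rcases hh with ⟨f1, -⟩ | ⟨f1, f2⟩
          · exact hqA f1
          · exact revu hT hLA hApr hLAc
              (show MLLLink.par a b A ∈ T.links from f2 ▸ hM) (Or.inr f1)
        have hHq : (empGraph T S1 A).Adj b g := by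
          rw [emp_adj hLA hApr hLAc]; exact ⟨hadjq, hqnea⟩
        rw [e2]
        exact (empire_subset hqe).trans hHq.reachable
      · -- w = b selected by S (false), w' = g ; the S1-edge is (a, g)
        have hbe : b ∈ empire T A := e1 ▸ hw
        have hqA : a ≠ A := by
          intro h
          have := hPr1.1 h.symm
          rw [this] at hv
          exact Bool.noConfusion hv
        have hqe : a ∈ empire T A := by
          by_contra hq
          rw [hPr2.2 ⟨hbe, hq⟩] at hv
          exact Bool.noConfusion hv
        have hS1v : S1 (MLLLink.par a b g) = true := by
          rcases Bool.eq_false_or_eq_true (S1 (MLLLink.par a b g)) with h | h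
          · exact h
          · exact absurd (hv.trans h.symm) hST
        have hadjq : (drGraph T S1).Adj a g :=
          dr_adj_intro hM hprnd.2.1 (Or.inl ⟨hS1v, rfl, rfl⟩)
        have hqnea : ¬ s(a,g) = s(A,cA) := by
          intro hh
          rw [Sym2.eq_iff] at hh
          rcases hh with ⟨f1, -⟩ | ⟨f1, f2⟩
          · exact hqA f1
          · exact revu hT hLA hApr hLAc
              (show MLLLink.par a b A ∈ T.links from f2 ▸ hM) (Or.inl f1)
        have hHq : (empGraph T S1 A).Adj a g := by
          rw [emp_adj hLA hApr hLAc]; exact ⟨hadjq, hqnea⟩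
        rw [e2]
        exact (empire_subset hqe).trans hHq.reachable
    · rcases h1 with ⟨hv, e1, e2⟩ | ⟨hv, e1, e2⟩
      · -- w = g (conclusion, in the empire), w' = a : go up through the link
        have hge : g ∈ empire T A := e2 ▸ hw
        have hnup : ¬ s(a,g) = s(A,cA) := by
          rw [← e1, ← e2]
          intro hh
          exact hneA ((Sym2.eq_swap).trans hh)
        have : a ∈ empire T A :=
          up hT hLA hApr hLAc hge hM (by simp [MLLLink.prems])
            (by simp [MLLLink.concls]) hnup
        rw [e1]
        exact empire_subset this
      · have hge : g ∈ empire T A := e2 ▸ hw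
        have hnup : ¬ s(b,g) = s(A,cA) := by
          rw [← e1, ← e2]
          intro hh
          exact hneA ((Sym2.eq_swap).trans hh)
        have : b ∈ empire T A :=
          up hT hLA hApr hLAc hge hM (by simp [MLLLink.prems])
            (by simp [MLLLink.concls]) hnup
        rw [e1]
        exact empire_subset this

end PrincipalProof

namespace PrincipalProof
open SimpleGraph

variable {V : Type} [DecidableEq V]
variable {T : MLLProofStructure V} {A : V} {LA : MLLLink V} {cA : V}

lemma forward (hT : IsProofNet T) (hLA : LA ∈ T.links) (hApr : A ∈ LA.prems)
    (hLAc : LA.concls = [cA]) {S : MLLLink V → Bool}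
    (heq : empComp T S A = empire T A) : IsPrincipal T A S := by
  have hAcA' : A ≠ cA := hAcA hLA hApr hLAc
  constructor
  · intro a b g hpar
    have hnd := par_nodup hpar
    constructor
    · intro hAa
      rcases Bool.eq_false_or_eq_true (S (MLLLink.par a b g)) with hv | hv
      · exact hv
      exfalso
      have hApr2 : A ∈ (MLLLink.par a b g).prems := by simp [MLLLink.prems, hAa]
      have hLL : MLLLink.par a b g = LA :=
        T.prem_unique A (MLLLink.par a b g) hpar LA hLA hApr2 hApr
      have hgcA : g = cA := by
        have := hLAc
        rw [← hLL] at this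
        simpa [MLLLink.concls] using this
      have hb : b ∈ empire T A := side1 hT hpar hAa
      have hadjb : (drGraph T S).Adj b g :=
        dr_adj_intro hpar hnd.2.2 (Or.inr ⟨hv, rfl, rfl⟩)
      have hnea : ¬ s(b,g) = s(A,cA) := by
        intro hh
        rw [Sym2.eq_iff] at hh
        rcases hh with ⟨f1, -⟩ | ⟨-, f2⟩
        · exact hnd.1 (hAa.symm.trans f1.symm)
        · exact hAcA' (f2.symm.trans hgcA)
      have hH : (empGraph T S A).Adj b g := by
        rw [emp_adj hLA hApr hLAc]; exact ⟨hadjb, hnea⟩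
      have hgc : g ∈ empComp T S A := (empire_subset hb).trans hH.reachable
      rw [heq] at hgc
      exact cA_not_empire hT hLA hApr hLAc (hgcA ▸ hgc)
    · intro hAb
      rcases Bool.eq_false_or_eq_true (S (MLLLink.par a b g)) with hv | hv
      swap
      · exact hv
      exfalso
      have hApr2 : A ∈ (MLLLink.par a b g).prems := by simp [MLLLink.prems, hAb]
      have hLL : MLLLink.par a b g = LA :=
        T.prem_unique A (MLLLink.par a b g) hpar LA hLA hApr2 hApr
      have hgcA : g = cA := by
        have := hLAc
        rw [← hLL] at this
        simpa [MLLLink.concls] using this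
      have ha : a ∈ empire T A := side2 hT hpar hAb
      have hadja : (drGraph T S).Adj a g :=
        dr_adj_intro hpar hnd.2.1 (Or.inl ⟨hv, rfl, rfl⟩)
      have hnea : ¬ s(a,g) = s(A,cA) := by
        intro hh
        rw [Sym2.eq_iff] at hh
        rcases hh with ⟨f1, -⟩ | ⟨-, f2⟩
        · exact hnd.1 (f1.trans hAb)
        · exact hAcA' (f2.symm.trans hgcA)
      have hH : (empGraph T S A).Adj a g := by
        rw [emp_adj hLA hApr hLAc]; exact ⟨hadja, hnea⟩
      have hgc : g ∈ empComp T S A := (empire_subset ha).trans hH.reachable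
      rw [heq] at hgc
      exact cA_not_empire hT hLA hApr hLAc (hgcA ▸ hgc)
  · intro a b g hpar
    have hnd := par_nodup hpar
    constructor
    · rintro ⟨ha, hb⟩
      rcases Bool.eq_false_or_eq_true (S (MLLLink.par a b g)) with hv | hv
      swap
      · exact hv
      exfalso
      have hbA : b ≠ A := fun h => hb (h ▸ mem_empire_self)
      have hAa : ¬ A = a := fun h => hb (side1 hT hpar h)
      have hadja : (drGraph T S).Adj a g :=
        dr_adj_intro hpar hnd.2.1 (Or.inl ⟨hv, rfl, rfl⟩)
      have hnea : ¬ s(a,g) = s(A,cA) := by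
        intro hh
        rw [Sym2.eq_iff] at hh
        rcases hh with ⟨f1, -⟩ | ⟨f1, f2⟩
        · exact hAa f1.symm
        · exact revu hT hLA hApr hLAc
            (show MLLLink.par a b A ∈ T.links from f2 ▸ hpar) (Or.inl f1)
      have hH : (empGraph T S A).Adj a g := by
        rw [emp_adj hLA hApr hLAc]; exact ⟨hadja, hnea⟩
      have hgc : g ∈ empComp T S A := (empire_subset ha).trans hH.reachable
      rw [heq] at hgc
      have hnb : ¬ s(b,g) = s(A,cA) := by
        intro hh
        rw [Sym2.eq_iff] at hh
        rcases hh with ⟨f1, -⟩ | ⟨f1, f2⟩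
        · exact hbA f1
        · exact revu hT hLA hApr hLAc
            (show MLLLink.par a b A ∈ T.links from f2 ▸ hpar) (Or.inr f1)
      exact hb (up hT hLA hApr hLAc hgc hpar (by simp [MLLLink.prems])
        (by simp [MLLLink.concls]) hnb)
    · rintro ⟨hb, ha⟩
      rcases Bool.eq_false_or_eq_true (S (MLLLink.par a b g)) with hv | hv
      · exact hv
      exfalso
      have haA : a ≠ A := fun h => ha (h ▸ mem_empire_self)
      have hAb : ¬ A = b := fun h => ha (side2 hT hpar h)
      have hadjb : (drGraph T S).Adj b g :=
        dr_adj_intro hpar hnd.2.2 (Or.inr ⟨hv, rfl, rfl⟩)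
      have hnea : ¬ s(b,g) = s(A,cA) := by
        intro hh
        rw [Sym2.eq_iff] at hh
        rcases hh with ⟨f1, -⟩ | ⟨f1, f2⟩
        · exact hAb f1.symm
        · exact revu hT hLA hApr hLAc
            (show MLLLink.par a b A ∈ T.links from f2 ▸ hpar) (Or.inr f1)
      have hH : (empGraph T S A).Adj b g := by
        rw [emp_adj hLA hApr hLAc]; exact ⟨hadjb, hnea⟩
      have hgc : g ∈ empComp T S A := (empire_subset hb).trans hH.reachable
      rw [heq] at hgc
      have hna : ¬ s(a,g) = s(A,cA) := by
        intro hh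
        rw [Sym2.eq_iff] at hh
        rcases hh with ⟨f1, -⟩ | ⟨f1, f2⟩
        · exact haA f1
        · exact revu hT hLA hApr hLAc
            (show MLLLink.par a b A ∈ T.links from f2 ▸ hpar) (Or.inl f1)
      exact ha (up hT hLA hApr hLAc hgc hpar (by simp [MLLLink.prems])
        (by simp [MLLLink.concls]) hna)

open scoped Classical in
/-- A canonical principal switching for `A`. -/
noncomputable def principalSwitch (T : MLLProofStructure V) (A : V) : MLLLink V → Bool :=
  fun L => match L with
  | MLLLink.par u w _ =>
      if A = u then true else if A = w then false
      else if w ∈ empire T A ∧ u ∉ empire T A then true else false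
  | _ => true

open scoped Classical in
lemma principalSwitch_par {u w g : V} :
    principalSwitch T A (MLLLink.par u w g) =
      (if A = u then true else if A = w then false
        else if w ∈ empire T A ∧ u ∉ empire T A then true else false) := rfl

lemma principal_principalSwitch (hT : IsProofNet T) (hLA : LA ∈ T.links)
    (hApr : A ∈ LA.prems) (hLAc : LA.concls = [cA]) :
    IsPrincipal T A (principalSwitch T A) := by
  constructor
  · intro a b g hpar
    constructor
    · intro hAa
      rw [principalSwitch_par, if_pos hAa]
    · intro hAb
      have hab : ¬ A = a := fun h => (par_nodup hpar).1 (h.symm.trans hAb)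
      rw [principalSwitch_par, if_neg hab, if_pos hAb]
  · intro a b g hpar
    constructor
    · rintro ⟨ha, hb⟩
      have h1 : ¬ A = a := fun h => hb (side1 hT hpar h)
      have h2 : ¬ A = b := fun h => hb (h ▸ mem_empire_self)
      have h3 : ¬ (b ∈ empire T A ∧ a ∉ empire T A) := fun h => h.2 ha
      rw [principalSwitch_par, if_neg h1, if_neg h2, if_neg h3]
    · rintro ⟨hb, ha⟩
      by_cases h1 : A = a
      · rw [principalSwitch_par, if_pos h1]
      have h2 : ¬ A = b := fun h => ha (side2 hT hpar h)
      rw [principalSwitch_par, if_neg h1, if_neg h2, if_pos ⟨hb, ha⟩]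

lemma caseI_comp (hT : IsProofNet T) (hnp : ∀ L ∈ T.links, A ∉ L.prems)
    (S : MLLLink V → Bool) (v : V) : v ∈ empComp T S A := by
  have hbe : belowEdges T A = ∅ := by
    ext e
    simp only [Set.mem_empty_iff_false, iff_false]
    rintro ⟨L, hL, hAp, -⟩
    exact hnp L hL hAp
  show (empGraph T S A).Reachable A v
  rw [empGraph, hbe, SimpleGraph.deleteEdges_empty]
  exact (hT S).2.preconnected A v

lemma caseI_empire (hT : IsProofNet T) (hnp : ∀ L ∈ T.links, A ∉ L.prems) (v : V) :
    v ∈ empire T A :=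
  Set.mem_iInter.2 fun S => caseI_comp hT hnp S v

lemma caseI_princ (hT : IsProofNet T) (hnp : ∀ L ∈ T.links, A ∉ L.prems)
    (S : MLLLink V → Bool) : IsPrincipal T A S := by
  constructor
  · intro a b g hpar
    constructor
    · intro hAa
      exact absurd (show A ∈ (MLLLink.par a b g).prems by simp [MLLLink.prems, hAa])
        (hnp _ hpar)
    · intro hAb
      exact absurd (show A ∈ (MLLLink.par a b g).prems by simp [MLLLink.prems, hAb])
        (hnp _ hpar)
  · intro a b g hpar
    constructor
    · rintro ⟨-, hb⟩
      exact absurd (caseI_empire hT hnp b) hb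
    · rintro ⟨-, ha⟩
      exact absurd (caseI_empire hT hnp a) ha

end PrincipalProof


/-- There is a switching whose component `Θ_S^A` has vertex set exactly the
empire of `A`; moreover a switching has this property iff it is principal for `A`. -/
theorem principal_switching (Θ : MLLProofStructure V) (hΘ : IsProofNet Θ) (A : V) :
    (∃ S : MLLLink V → Bool, empComp Θ S A = empire Θ A) ∧
    (∀ S : MLLLink V → Bool, empComp Θ S A = empire Θ A ↔ IsPrincipal Θ A S) := by

  classical
  by_cases hA : ∃ L ∈ Θ.links, A ∈ L.prems
  · obtain ⟨LA, hLA, hApr⟩ := hA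
    obtain ⟨cA, hLAc⟩ : ∃ c0, LA.concls = [c0] := by
      cases LA with
      | idl c1 c2 => simp [MLLLink.prems] at hApr
      | tensor a b c => exact ⟨c, rfl⟩
      | par a b c => exact ⟨c, rfl⟩
    have hPr := PrincipalProof.principal_principalSwitch hΘ hLA hApr hLAc
    exact ⟨⟨PrincipalProof.principalSwitch Θ A,
        PrincipalProof.backward hΘ hLA hApr hLAc _ hPr⟩,
      fun S => ⟨fun heq => PrincipalProof.forward hΘ hLA hApr hLAc heq,
        fun hp => PrincipalProof.backward hΘ hLA hApr hLAc S hp⟩⟩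
  · push_neg at hA
    have hcomp : ∀ (S : MLLLink V → Bool), empComp Θ S A = empire Θ A := by
      intro S
      ext v
      exact ⟨fun _ => PrincipalProof.caseI_empire hΘ hA v,
        fun _ => PrincipalProof.caseI_comp hΘ hA S v⟩
    exact ⟨⟨fun _ => true, hcomp _⟩,
      fun S => ⟨fun _ => PrincipalProof.caseI_princ hΘ hA S, fun _ => hcomp S⟩⟩
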